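/- For every T > 0, every x₀ ∈ ℝ^d and every continuous g : [0,T] → ℝ^d with g(0) = 0, there exists exactly one continuous function f : [0,T] → ℝ^d such that for all t ∈ [0,T]: f(t) = x₀ − ∫₀ᵗ ∇V(f(s)) ds − ∫₀ᵗ (1/s)·∫₀ˢ ∇F(f(s)−f(u)) du ds + g(t), where the inner time-averaged integrand s ↦ (1/s)∫₀ˢ ∇F(f(s)−f(u)) du (defined for s > 0) is bounded near s = 0 so that the outer integral is well defined. -/

import Mathlib

open MeasureTheory Set

noncomputable section

abbrev Ed (d : ℕ) : Type := EuclideanSpace ℝ (Fin d)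

/-- `f` is a continuous solution on `[0,T]` of the integral equation of the original
self-interacting diffusion (1.1), written with the time-averaged occupation measure
`μ_s = (1/s)∫₀ˢ δ_{f(u)} du`; the inner time-averaged integrand is required to be
bounded on `(0,T]` so that the outer integral is well defined. -/
def IsSIDSolutionOrig {d : ℕ} (V F : Ed d → ℝ) (T : ℝ)
    (x₀ : Ed d) (g : ℝ → Ed d) (f : ℝ → Ed d) : Prop :=
  ContinuousOn f (Icc 0 T) ∧
  (∃ C : ℝ, ∀ s ∈ Ioc (0:ℝ) T,
    ‖(1 / s) • (∫ u in (0:ℝ)..s, gradient F (f s - f u))‖ ≤ C) ∧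
  ∀ t ∈ Icc (0:ℝ) T,
    f t = x₀ - (∫ s in (0:ℝ)..t, gradient V (f s))
      - (∫ s in (0:ℝ)..t, (1 / s) • (∫ u in (0:ℝ)..s, gradient F (f s - f u)))
      + g t

namespace SIDAux

variable {d : ℕ}

/-- The time-averaged inner integrand. -/
def innAvg (F : Ed d → ℝ) (c : ℝ → Ed d) (s : ℝ) : Ed d :=
  (1 / s) • ∫ u in (0:ℝ)..s, gradient F (c s - c u)

/-- The Picard map on curves. -/
def Phimap (V F : Ed d → ℝ) (x₀ : Ed d) (g : ℝ → Ed d) (c : ℝ → Ed d) (t : ℝ) : Ed d :=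
  x₀ - (∫ s in (0:ℝ)..t, gradient V (c s)) - (∫ s in (0:ℝ)..t, innAvg F c s) + g t

lemma continuous_gradient {V : Ed d → ℝ} (hV : ContDiff ℝ 2 V) : Continuous (gradient V) := by
  unfold gradient
  exact (InnerProductSpace.toDual ℝ (Ed d)).symm.continuous.comp
    (hV.continuous_fderiv (by norm_num))

lemma cont_innerInt {F : Ed d → ℝ} (hF' : Continuous (gradient F)) {c : ℝ → Ed d}
    (hc : Continuous c) :
    Continuous (fun s => ∫ u in (0:ℝ)..s, gradient F (c s - c u)) := by
  have h : Continuous (Function.uncurry fun s u => gradient F (c s - c u)) := by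
    apply hF'.comp
    exact ((hc.comp continuous_fst).sub (hc.comp continuous_snd))
  exact intervalIntegral.continuous_parametric_intervalIntegral_of_continuous
    (μ := volume) h continuous_id

lemma innAvg_aesm {F : Ed d → ℝ} (hF' : Continuous (gradient F)) {c : ℝ → Ed d}
    (hc : Continuous c) : AEStronglyMeasurable (innAvg F c) volume := by
  have h1 : Measurable fun s : ℝ => 1 / s := measurable_const.div measurable_id
  have h2 := (cont_innerInt hF' hc).measurable
  exact (h1.smul h2).aestronglyMeasurable

lemma innAvg_bound {F : Ed d → ℝ} {c : ℝ → Ed d} {M : ℝ}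
    (hM : ∀ s u : ℝ, ‖gradient F (c s - c u)‖ ≤ M) (s : ℝ) : ‖innAvg F c s‖ ≤ M := by
  have hM0 : 0 ≤ M := le_trans (norm_nonneg _) (hM 0 0)
  rcases eq_or_ne s 0 with rfl | hs
  · simp [innAvg, hM0]
  · have hI : ‖∫ u in (0:ℝ)..s, gradient F (c s - c u)‖ ≤ M * |s - 0| :=
      intervalIntegral.norm_integral_le_of_norm_le_const fun u _ => hM s u
    rw [innAvg, norm_smul]
    calc ‖(1:ℝ)/s‖ * ‖∫ u in (0:ℝ)..s, gradient F (c s - c u)‖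
        ≤ ‖(1:ℝ)/s‖ * (M * |s - 0|) := by
          exact mul_le_mul_of_nonneg_left hI (norm_nonneg _)
      _ = M := by
          rw [Real.norm_eq_abs, sub_zero, abs_div, abs_one]
          field_simp [abs_ne_zero.mpr hs]

lemma innAvg_integrableOn {F : Ed d → ℝ} (hF' : Continuous (gradient F)) {c : ℝ → Ed d}
    (hc : Continuous c) {M : ℝ} (hM : ∀ s u : ℝ, ‖gradient F (c s - c u)‖ ≤ M)
    {s : Set ℝ} (hfin : volume s ≠ ⊤) : IntegrableOn (innAvg F c) s volume :=
  Measure.integrableOn_of_bounded hfin (innAvg_aesm hF' hc)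
    (Filter.Eventually.of_forall fun x => innAvg_bound hM x)

lemma innAvg_intervalIntegrable {F : Ed d → ℝ} (hF' : Continuous (gradient F)) {c : ℝ → Ed d}
    (hc : Continuous c) {M : ℝ} (hM : ∀ s u : ℝ, ‖gradient F (c s - c u)‖ ≤ M)
    (a b : ℝ) : IntervalIntegrable (innAvg F c) volume a b := by
  constructor <;> exact innAvg_integrableOn hF' hc hM measure_Ioc_lt_top.ne

lemma Phimap_contOn {V F : Ed d → ℝ} (hV' : Continuous (gradient V))
    (hF' : Continuous (gradient F)) (x₀ : Ed d) {g : ℝ → Ed d} {T : ℝ} (hT : 0 ≤ T)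
    (hg : ContinuousOn g (Icc 0 T)) {c : ℝ → Ed d} (hc : Continuous c)
    {M : ℝ} (hM : ∀ s u : ℝ, ‖gradient F (c s - c u)‖ ≤ M) :
    ContinuousOn (Phimap V F x₀ g c) (Icc 0 T) := by
  have h1 : ContinuousOn (fun t => ∫ s in (0:ℝ)..t, gradient V (c s)) (Icc 0 T) := by
    have := intervalIntegral.continuousOn_primitive_interval
      (a := (0:ℝ)) (b := T) (μ := volume) (f := fun s => gradient V (c s))
      (((hV'.comp hc).continuousOn).integrableOn_compact isCompact_uIcc)
    rwa [uIcc_of_le hT] at this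
  have h2 : ContinuousOn (fun t => ∫ s in (0:ℝ)..t, innAvg F c s) (Icc 0 T) := by
    have := intervalIntegral.continuousOn_primitive_interval
      (a := (0:ℝ)) (b := T) (μ := volume) (f := innAvg F c)
      (innAvg_integrableOn hF' hc hM (by
        exact isCompact_uIcc.measure_lt_top.ne))
    rwa [uIcc_of_le hT] at this
  exact ((continuousOn_const.sub h1).sub h2).add hg

lemma key {V F : Ed d → ℝ} {LV LF : ℝ} (hLV : 0 ≤ LV) (hLF : 0 ≤ LF)
    (hV' : Continuous (gradient V)) (hF' : Continuous (gradient F))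
    (hVlip : ∀ x y : Ed d, ‖gradient V x - gradient V y‖ ≤ LV * ‖x - y‖)
    (hFlip : ∀ x y : Ed d, ‖gradient F x - gradient F y‖ ≤ LF * ‖x - y‖)
    {T : ℝ} (x₀ : Ed d) (g : ℝ → Ed d)
    {c e : ℝ → Ed d} (hc : Continuous c) (he : Continuous e)
    {Mc Me : ℝ} (hMc : ∀ s u : ℝ, ‖gradient F (c s - c u)‖ ≤ Mc)
    (hMe : ∀ s u : ℝ, ‖gradient F (e s - e u)‖ ≤ Me)
    {K : ℝ} (hK : 0 ≤ K) (n : ℕ)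
    (hce : ∀ s ∈ Icc (0:ℝ) T, ‖c s - e s‖ ≤ K * s ^ n) :
    ∀ t ∈ Icc (0:ℝ) T, ‖Phimap V F x₀ g c t - Phimap V F x₀ g e t‖ ≤
      (LV + 2*LF) * K * t ^ (n+1) / (n+1) := by
  intro t ht
  have ht0 : 0 ≤ t := ht.1
  have htT : t ≤ T := ht.2
  have hiVc : IntervalIntegrable (fun s => gradient V (c s)) volume 0 t :=
    ((hV'.comp hc).intervalIntegrable 0 t)
  have hiVe : IntervalIntegrable (fun s => gradient V (e s)) volume 0 t :=
    ((hV'.comp he).intervalIntegrable 0 t)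
  have hiAc := innAvg_intervalIntegrable hF' hc hMc 0 t
  have hiAe := innAvg_intervalIntegrable hF' he hMe 0 t
  have hdiff : Phimap V F x₀ g c t - Phimap V F x₀ g e t
      = ∫ s in (0:ℝ)..t,
          ((gradient V (e s) - gradient V (c s)) + (innAvg F e s - innAvg F c s)) := by
    rw [intervalIntegral.integral_add (hiVe.sub hiVc) (hiAe.sub hiAc),
      intervalIntegral.integral_sub hiVe hiVc, intervalIntegral.integral_sub hiAe hiAc]
    unfold Phimap
    abel
  rw [hdiff]
  have hbd : ∀ s ∈ Set.uIoc (0:ℝ) t,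
      ‖(gradient V (e s) - gradient V (c s)) + (innAvg F e s - innAvg F c s)‖
        ≤ (LV + 2*LF) * K * s ^ n := by
    intro s hs
    rw [uIoc_of_le ht0] at hs
    have hs0 : 0 < s := hs.1
    have hsT : s ∈ Icc (0:ℝ) T := ⟨hs0.le, hs.2.trans htT⟩
    have hcs : ‖c s - e s‖ ≤ K * s ^ n := hce s hsT
    have h1 : ‖gradient V (e s) - gradient V (c s)‖ ≤ LV * (K * s ^ n) := by
      calc ‖gradient V (e s) - gradient V (c s)‖ ≤ LV * ‖e s - c s‖ := hVlip _ _
        _ ≤ LV * (K * s ^ n) := by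
            rw [norm_sub_rev]; exact mul_le_mul_of_nonneg_left hcs hLV
    have h2 : ‖innAvg F e s - innAvg F c s‖ ≤ 2 * LF * (K * s ^ n) := by
      have hic : IntervalIntegrable (fun u => gradient F (c s - c u)) volume 0 s :=
        ((hF'.comp (continuous_const.sub hc)).intervalIntegrable 0 s)
      have hie : IntervalIntegrable (fun u => gradient F (e s - e u)) volume 0 s :=
        ((hF'.comp (continuous_const.sub he)).intervalIntegrable 0 s)
      have heq : innAvg F e s - innAvg F c s
          = (1 / s) • ∫ u in (0:ℝ)..s,
              (gradient F (e s - e u) - gradient F (c s - c u)) := by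
        rw [intervalIntegral.integral_sub hie hic, innAvg, innAvg, smul_sub]
      rw [heq, norm_smul]
      have hIbd : ‖∫ u in (0:ℝ)..s, (gradient F (e s - e u) - gradient F (c s - c u))‖
          ≤ (2 * LF * (K * s ^ n)) * |s - 0| := by
        apply intervalIntegral.norm_integral_le_of_norm_le_const
        intro u hu
        rw [uIoc_of_le hs0.le] at hu
        have huT : u ∈ Icc (0:ℝ) T := ⟨hu.1.le, hu.2.trans hsT.2⟩
        have hun : u ^ n ≤ s ^ n := pow_le_pow_left₀ hu.1.le hu.2 n
        have hcu : ‖c u - e u‖ ≤ K * s ^ n :=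
          (hce u huT).trans (mul_le_mul_of_nonneg_left hun hK)
        calc ‖gradient F (e s - e u) - gradient F (c s - c u)‖
            ≤ LF * ‖(e s - e u) - (c s - c u)‖ := hFlip _ _
          _ = LF * ‖(e s - c s) - (e u - c u)‖ := by rw [sub_sub_sub_comm]
          _ ≤ LF * (‖e s - c s‖ + ‖e u - c u‖) :=
              mul_le_mul_of_nonneg_left (norm_sub_le _ _) hLF
          _ ≤ LF * (K * s ^ n + K * s ^ n) := by
              apply mul_le_mul_of_nonneg_left _ hLF
              rw [norm_sub_rev, norm_sub_rev (e u)]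
              exact add_le_add hcs hcu
          _ = 2 * LF * (K * s ^ n) := by ring
      calc ‖(1:ℝ)/s‖ * ‖∫ u in (0:ℝ)..s,
              (gradient F (e s - e u) - gradient F (c s - c u))‖
          ≤ ‖(1:ℝ)/s‖ * ((2 * LF * (K * s ^ n)) * |s - 0|) :=
            mul_le_mul_of_nonneg_left hIbd (norm_nonneg _)
        _ = 2 * LF * (K * s ^ n) := by
            rw [Real.norm_eq_abs, sub_zero, abs_of_pos (by positivity : (0:ℝ) < 1/s),
              abs_of_pos hs0]
            field_simp
    calc ‖(gradient V (e s) - gradient V (c s)) + (innAvg F e s - innAvg F c s)‖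
        ≤ ‖gradient V (e s) - gradient V (c s)‖ + ‖innAvg F e s - innAvg F c s‖ :=
          norm_add_le _ _
      _ ≤ LV * (K * s ^ n) + 2 * LF * (K * s ^ n) := add_le_add h1 h2
      _ = (LV + 2*LF) * K * s ^ n := by ring
  have hgint : IntervalIntegrable (fun s : ℝ => (LV + 2*LF) * K * s ^ n) volume 0 t :=
    ((continuous_const.mul (continuous_pow n)).intervalIntegrable 0 t)
  calc ‖∫ s in (0:ℝ)..t,
          ((gradient V (e s) - gradient V (c s)) + (innAvg F e s - innAvg F c s))‖
      ≤ |∫ s in (0:ℝ)..t, (LV + 2*LF) * K * s ^ n| :=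
        intervalIntegral.norm_integral_le_abs_of_norm_le
          (Filter.Eventually.mono (ae_restrict_mem measurableSet_uIoc) hbd) hgint
    _ = (LV + 2*LF) * K * t ^ (n+1) / (n+1) := by
        rw [intervalIntegral.integral_const_mul, integral_pow]
        simp only [zero_pow (Nat.succ_ne_zero n), sub_zero]
        rw [abs_of_nonneg (by positivity)]
        ring

/-- Extension of a continuous map on `[0,T]` to all of `ℝ` via projection. -/
def ext {T : ℝ} (hT : (0:ℝ) ≤ T) (f : C(Icc (0:ℝ) T, Ed d)) : ℝ → Ed d :=
  fun t => f (projIcc 0 T hT t)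

lemma ext_cont {T : ℝ} (hT : (0:ℝ) ≤ T) (f : C(Icc (0:ℝ) T, Ed d)) :
    Continuous (ext hT f) := f.continuous.comp continuous_projIcc

lemma ext_eq {T : ℝ} (hT : (0:ℝ) ≤ T) (f : C(Icc (0:ℝ) T, Ed d)) {t : ℝ}
    (htm : t ∈ Icc (0:ℝ) T) : ext hT f t = f ⟨t, htm⟩ := by
  simp only [ext, projIcc_of_mem hT htm]

lemma exists_bound {F : Ed d → ℝ} (hF' : Continuous (gradient F)) {T : ℝ}
    (hT : (0:ℝ) ≤ T) (f : C(Icc (0:ℝ) T, Ed d)) :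
    ∃ M : ℝ, ∀ s u : ℝ, ‖gradient F (ext hT f s - ext hT f u)‖ ≤ M := by
  obtain ⟨M, hM⟩ := (isCompact_Icc.prod isCompact_Icc).exists_bound_of_continuousOn
    (f := fun p : ℝ × ℝ => gradient F (ext hT f p.1 - ext hT f p.2))
    ((hF'.comp (((ext_cont hT f).comp continuous_fst).sub
      ((ext_cont hT f).comp continuous_snd))).continuousOn)
  refine ⟨M, fun s u => ?_⟩
  have h1 : ext hT f s = ext hT f ((projIcc 0 T hT s : Icc (0:ℝ) T) : ℝ) := by
    simp [ext, projIcc_val]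
  have h2 : ext hT f u = ext hT f ((projIcc 0 T hT u : Icc (0:ℝ) T) : ℝ) := by
    simp [ext, projIcc_val]
  rw [h1, h2]
  exact hM (_, _) ⟨(projIcc 0 T hT s).2, (projIcc 0 T hT u).2⟩

/-- The Picard map as a self-map of `C([0,T], ℝ^d)`. -/
def Phi (V F : Ed d → ℝ) (hV' : Continuous (gradient V)) (hF' : Continuous (gradient F))
    (x₀ : Ed d) {T : ℝ} (hT : (0:ℝ) ≤ T) (gex : ℝ → Ed d) (hgex : Continuous gex)
    (f : C(Icc (0:ℝ) T, Ed d)) : C(Icc (0:ℝ) T, Ed d) :=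
  ⟨(Icc (0:ℝ) T).restrict (Phimap V F x₀ gex (ext hT f)),
    ContinuousOn.restrict (Phimap_contOn hV' hF' x₀ hT hgex.continuousOn
      (ext_cont hT f) (exists_bound hF' hT f).choose_spec)⟩

lemma ext_Phi {V F : Ed d → ℝ} (hV' : Continuous (gradient V)) (hF' : Continuous (gradient F))
    (x₀ : Ed d) {T : ℝ} (hT : (0:ℝ) ≤ T) (gex : ℝ → Ed d) (hgex : Continuous gex)
    (f : C(Icc (0:ℝ) T, Ed d)) {t : ℝ} (htm : t ∈ Icc (0:ℝ) T) :
    ext hT (Phi V F hV' hF' x₀ hT gex hgex f) t = Phimap V F x₀ gex (ext hT f) t := by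
  unfold ext Phi
  rw [projIcc_of_mem hT htm]
  rfl

end SIDAux

/-- pathwise existence and uniqueness of the solution of the integral
equation of the self-interacting diffusion (1.1). -/
theorem stmt1 {d : ℕ} (hd : 1 ≤ d)
    (V F : Ed d → ℝ) (hV : ContDiff ℝ 2 V) (hF : ContDiff ℝ 2 F)
    (LV LF : ℝ) (hLV : 0 ≤ LV) (hLF : 0 ≤ LF)
    (hVlip : ∀ x y : Ed d, ‖gradient V x - gradient V y‖ ≤ LV * ‖x - y‖)
    (hFlip : ∀ x y : Ed d, ‖gradient F x - gradient F y‖ ≤ LF * ‖x - y‖)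
    (T : ℝ) (hT : 0 < T)
    (x₀ : Ed d) (g : ℝ → Ed d) (hg : ContinuousOn g (Icc 0 T)) (hg0 : g 0 = 0) :
    ∃ f : ℝ → Ed d, IsSIDSolutionOrig V F T x₀ g f ∧
      ∀ f₂ : ℝ → Ed d, IsSIDSolutionOrig V F T x₀ g f₂ →
        ∀ t ∈ Icc (0:ℝ) T, f₂ t = f t := by
  classical
  have hV' : Continuous (gradient V) := SIDAux.continuous_gradient hV
  have hF' : Continuous (gradient F) := SIDAux.continuous_gradient hF
  have hC0 : (0:ℝ) ≤ LV + 2 * LF := by linarith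
  -- the extension of g
  set gex : ℝ → Ed d := fun t => (Icc (0:ℝ) T).restrict g (projIcc 0 T hT.le t) with hgexdef
  have hgex_cont : Continuous gex := (ContinuousOn.restrict hg).comp continuous_projIcc
  have hgex_eq : ∀ t ∈ Icc (0:ℝ) T, gex t = g t := by
    intro t htm
    simp only [hgexdef, restrict_apply, projIcc_of_mem hT.le htm]
    rfl
  set Φ : C(Icc (0:ℝ) T, Ed d) → C(Icc (0:ℝ) T, Ed d) :=
    SIDAux.Phi V F hV' hF' x₀ hT.le gex hgex_cont with hΦdef
  -- iterated Picard estimate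
  have hiter : ∀ (f h : C(Icc (0:ℝ) T, Ed d)) (n : ℕ), ∀ t ∈ Icc (0:ℝ) T,
      ‖SIDAux.ext hT.le (Φ^[n] f) t - SIDAux.ext hT.le (Φ^[n] h) t‖
        ≤ (dist f h * (LV + 2*LF) ^ n / (Nat.factorial n)) * t ^ n := by
    intro f h n
    induction n with
    | zero =>
      intro t htm
      simp only [Function.iterate_zero, id_eq, pow_zero, mul_one, Nat.factorial_zero,
        Nat.cast_one, div_one]
      rw [SIDAux.ext_eq hT.le f htm, SIDAux.ext_eq hT.le h htm, ← dist_eq_norm]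
      exact ContinuousMap.dist_apply_le_dist _
    | succ n ih =>
      have hK : (0:ℝ) ≤ dist f h * (LV + 2*LF) ^ n / (Nat.factorial n) :=
        div_nonneg (mul_nonneg dist_nonneg (pow_nonneg hC0 n)) (Nat.cast_nonneg _)
      have step := SIDAux.key hLV hLF hV' hF' hVlip hFlip x₀ gex
        (SIDAux.ext_cont hT.le (Φ^[n] f)) (SIDAux.ext_cont hT.le (Φ^[n] h))
        (SIDAux.exists_bound hF' hT.le (Φ^[n] f)).choose_spec
        (SIDAux.exists_bound hF' hT.le (Φ^[n] h)).choose_spec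
        hK n ih
      intro t htm
      have h1 : SIDAux.ext hT.le (Φ^[n+1] f) t
          = SIDAux.Phimap V F x₀ gex (SIDAux.ext hT.le (Φ^[n] f)) t := by
        rw [Function.iterate_succ_apply', hΦdef]
        exact SIDAux.ext_Phi hV' hF' x₀ hT.le gex hgex_cont _ htm
      have h2 : SIDAux.ext hT.le (Φ^[n+1] h) t
          = SIDAux.Phimap V F x₀ gex (SIDAux.ext hT.le (Φ^[n] h)) t := by
        rw [Function.iterate_succ_apply', hΦdef]
        exact SIDAux.ext_Phi hV' hF' x₀ hT.le gex hgex_cont _ htm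
      rw [h1, h2]
      refine (step t htm).trans_eq ?_
      have hfac : ((Nat.factorial (n+1) : ℕ) : ℝ) = (n+1) * (Nat.factorial n) := by
        push_cast [Nat.factorial_succ]; ring
      have hfne : ((Nat.factorial n : ℕ) : ℝ) ≠ 0 :=
        Nat.cast_ne_zero.mpr (Nat.factorial_ne_zero n)
      have hn1 : ((n:ℝ) + 1) ≠ 0 := by positivity
      rw [hfac]
      field_simp
      ring
  -- Lipschitz constant of the n-th iterate
  have hlip : ∀ (n : ℕ) (f h : C(Icc (0:ℝ) T, Ed d)),
      dist (Φ^[n] f) (Φ^[n] h)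
        ≤ ((LV + 2*LF) * T) ^ n / (Nat.factorial n) * dist f h := by
    intro n f h
    have hb : (0:ℝ) ≤ ((LV + 2*LF) * T) ^ n / (Nat.factorial n) * dist f h :=
      mul_nonneg (div_nonneg (pow_nonneg (mul_nonneg hC0 hT.le) n) (Nat.cast_nonneg _))
        dist_nonneg
    rw [ContinuousMap.dist_le hb]
    intro p
    have hp : (p : ℝ) ∈ Icc (0:ℝ) T := p.2
    have := hiter f h n p hp
    rw [SIDAux.ext_eq hT.le _ hp, SIDAux.ext_eq hT.le _ hp] at this
    rw [dist_eq_norm]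
    calc ‖(Φ^[n] f) p - (Φ^[n] h) p‖
        = ‖(Φ^[n] f) ⟨(p:ℝ), hp⟩ - (Φ^[n] h) ⟨(p:ℝ), hp⟩‖ := by congr
      _ ≤ (dist f h * (LV + 2*LF) ^ n / (Nat.factorial n)) * (p:ℝ) ^ n := this
      _ ≤ (dist f h * (LV + 2*LF) ^ n / (Nat.factorial n)) * T ^ n := by
          apply mul_le_mul_of_nonneg_left (pow_le_pow_left₀ hp.1 hp.2 n)
          exact div_nonneg (mul_nonneg dist_nonneg (pow_nonneg hC0 n)) (Nat.cast_nonneg _)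
      _ = ((LV + 2*LF) * T) ^ n / (Nat.factorial n) * dist f h := by
          rw [mul_pow]; ring
  -- choose a contracting iterate
  obtain ⟨n, hnlt, hn1⟩ : ∃ n : ℕ,
      ((LV + 2*LF) * T) ^ n / (Nat.factorial n) < 1/2 ∧ 1 ≤ n := by
    have htend := FloorSemiring.tendsto_pow_div_factorial_atTop ((LV + 2*LF) * T)
    have hev : ∀ᶠ n : ℕ in Filter.atTop,
        ((LV + 2*LF) * T) ^ n / (Nat.factorial n) < 1/2 :=
      htend.eventually_lt_const (by norm_num)
    exact (hev.and (Filter.eventually_ge_atTop 1)).exists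
  haveI : Nonempty C(Icc (0:ℝ) T, Ed d) := ⟨ContinuousMap.const _ x₀⟩
  have hcontr : ContractingWith (1/2 : NNReal) (Φ^[n]) := by
    constructor
    · rw [← NNReal.coe_lt_coe]
      norm_num
    · apply LipschitzWith.of_dist_le_mul
      intro f h
      refine (hlip n f h).trans ?_
      apply mul_le_mul_of_nonneg_right _ dist_nonneg
      push_cast
      exact hnlt.le
  set x : C(Icc (0:ℝ) T, Ed d) := ContractingWith.fixedPoint (Φ^[n]) hcontr with hxdef
  have hxfix : Φ^[n] x = x := hcontr.fixedPoint_isFixedPt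
  have hΦx : Φ x = x := by
    have h1 : Φ^[n] (Φ x) = Φ x := by
      rw [← Function.iterate_succ_apply, Function.iterate_succ_apply', hxfix]
    exact hcontr.fixedPoint_unique' h1 hxfix
  refine ⟨SIDAux.ext hT.le x, ⟨(SIDAux.ext_cont hT.le x).continuousOn, ?_, ?_⟩, ?_⟩
  · refine ⟨(SIDAux.exists_bound hF' hT.le x).choose, fun s hs => ?_⟩
    simpa [SIDAux.innAvg] using
      SIDAux.innAvg_bound (SIDAux.exists_bound hF' hT.le x).choose_spec s
  · intro t htm
    have h1 : SIDAux.ext hT.le x t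
        = SIDAux.Phimap V F x₀ gex (SIDAux.ext hT.le x) t := by
      conv_lhs => rw [← hΦx]
      exact SIDAux.ext_Phi hV' hF' x₀ hT.le gex hgex_cont x htm
    rw [h1]
    simp only [SIDAux.Phimap, SIDAux.innAvg]
    rw [hgex_eq t htm]
  · intro f₂ hsol t htm
    obtain ⟨hf₂c, -, hf₂eq⟩ := hsol
    set y : C(Icc (0:ℝ) T, Ed d) := ⟨(Icc (0:ℝ) T).restrict f₂, hf₂c.restrict⟩ with hydef
    have hyext : ∀ s ∈ Icc (0:ℝ) T, SIDAux.ext hT.le y s = f₂ s := by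
      intro s hs
      rw [SIDAux.ext_eq hT.le y hs, hydef]
      rfl
    have hΦy : Φ y = y := by
      apply ContinuousMap.ext
      intro p
      have hp : (p : ℝ) ∈ Icc (0:ℝ) T := p.2
      have hVcong : (∫ s in (0:ℝ)..(p:ℝ), gradient V (SIDAux.ext hT.le y s))
          = ∫ s in (0:ℝ)..(p:ℝ), gradient V (f₂ s) := by
        apply intervalIntegral.integral_congr
        intro s hs
        rw [uIcc_of_le hp.1] at hs
        simp only [hyext s ⟨hs.1, hs.2.trans hp.2⟩]
      have hAcong : (∫ s in (0:ℝ)..(p:ℝ), SIDAux.innAvg F (SIDAux.ext hT.le y) s)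
          = ∫ s in (0:ℝ)..(p:ℝ),
              (1/s) • ∫ u in (0:ℝ)..s, gradient F (f₂ s - f₂ u) := by
        apply intervalIntegral.integral_congr
        intro s hs
        rw [uIcc_of_le hp.1] at hs
        have hsT : s ∈ Icc (0:ℝ) T := ⟨hs.1, hs.2.trans hp.2⟩
        simp only [SIDAux.innAvg]
        rw [hyext s hsT]
        congr 1
        apply intervalIntegral.integral_congr
        intro u hu
        rw [uIcc_of_le hs.1] at hu
        simp only [hyext u ⟨hu.1, hu.2.trans hsT.2⟩]
      have h2 : (Φ y) p = f₂ p := by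
        show SIDAux.Phimap V F x₀ gex (SIDAux.ext hT.le y) (p:ℝ) = f₂ (p:ℝ)
        simp only [SIDAux.Phimap]
        rw [hVcong, hAcong, hgex_eq _ hp]
        exact (hf₂eq p hp).symm
      rw [h2, hydef]
      rfl
    have hyfix : Φ^[n] y = y := Function.IsFixedPt.iterate hΦy n
    have hyx : y = x := hcontr.fixedPoint_unique' hyfix hxfix
    calc f₂ t = y ⟨t, htm⟩ := rfl
      _ = x ⟨t, htm⟩ := by rw [hyx]
      _ = SIDAux.ext hT.le x t := (SIDAux.ext_eq hT.le x htm).symm
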